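/- Let ν > 0, t > 0, and define, for u with 0 < 2νu < t, P(u) = 2 − 2Φ(u/√(t − 2νu)), and P(u) = 0 for 2νu ≥ t. Then ∫₀^∞ P(u) du = 2 ∫₀^∞ (y√(ν²y² + t) − νy²) φ(y) dy, where φ is the standard Gaussian density and Φ the standard Gaussian CDF. -/

import Mathlib

open MeasureTheory Real

/-- The standard Gaussian density. -/
noncomputable def stdGaussianPDF (y : ℝ) : ℝ :=
  (Real.sqrt (2 * Real.pi))⁻¹ * Real.exp (-y ^ 2 / 2)

/-- The standard Gaussian cumulative distribution function. -/
noncomputable def stdGaussianCDF (x : ℝ) : ℝ :=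
  ∫ y in Set.Iic x, stdGaussianPDF y

lemma stdGaussianPDF_nonneg (y : ℝ) : 0 ≤ stdGaussianPDF y := by
  unfold stdGaussianPDF
  positivity

lemma stdGaussianPDF_eq : stdGaussianPDF = fun y => (Real.sqrt (2 * Real.pi))⁻¹ * Real.exp (-(1/2) * y ^ 2) := by
  funext y
  unfold stdGaussianPDF
  ring_nf

lemma stdGaussianPDF_integrable : Integrable stdGaussianPDF := by
  rw [stdGaussianPDF_eq]
  exact (integrable_exp_neg_mul_sq (by norm_num : (0:ℝ) < 1/2)).const_mul _

lemma stdGaussianPDF_integral : ∫ y, stdGaussianPDF y = 1 := by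
  rw [stdGaussianPDF_eq]
  rw [integral_const_mul, integral_gaussian]
  have : Real.pi / (1/2) = 2 * Real.pi := by ring
  rw [this]
  exact inv_mul_cancel₀ (by positivity)

lemma stdGaussianCDF_le_one (x : ℝ) : stdGaussianCDF x ≤ 1 := by
  unfold stdGaussianCDF
  rw [← stdGaussianPDF_integral]
  exact setIntegral_le_integral stdGaussianPDF_integrable
    (Filter.Eventually.of_forall stdGaussianPDF_nonneg)

lemma stdGaussianCDF_tail (x : ℝ) :
    2 - 2 * stdGaussianCDF x = 2 * ∫ y in Set.Ioi x, stdGaussianPDF y := by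
  have h := intervalIntegral.integral_Iic_add_Ioi (b := x) (f := stdGaussianPDF)
    stdGaussianPDF_integrable.integrableOn stdGaussianPDF_integrable.integrableOn
  rw [stdGaussianPDF_integral] at h
  unfold stdGaussianCDF
  linarith

lemma stdGaussianCDF_mono : Monotone stdGaussianCDF := by
  intro a b hab
  unfold stdGaussianCDF
  exact setIntegral_mono_set stdGaussianPDF_integrable.integrableOn
    (Filter.Eventually.of_forall stdGaussianPDF_nonneg)
    (HasSubset.Subset.eventuallyLE (Set.Iic_subset_Iic.mpr hab))

lemma stdGaussianPDF_measurable : Measurable stdGaussianPDF := by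
  unfold stdGaussianPDF
  fun_prop

lemma stdGaussianPDF_continuous : Continuous stdGaussianPDF := by
  unfold stdGaussianPDF
  fun_prop

/-- The inverse function: u < hfun ν t y ↔ (2νu < t ∧ u/√(t-2νu) < y), for u,y > 0. -/
noncomputable def hfun (ν t y : ℝ) : ℝ := y * Real.sqrt (ν ^ 2 * y ^ 2 + t) - ν * y ^ 2

lemma hfun_pos (ν t : ℝ) (hν : 0 < ν) (ht : 0 < t) {y : ℝ} (hy : 0 < y) :
    0 < hfun ν t y := by
  unfold hfun
  have h1 : ν * y < Real.sqrt (ν ^ 2 * y ^ 2 + t) := by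
    rw [show ν * y = √((ν*y)^2) by rw [Real.sqrt_sq (by positivity)]]
    apply Real.sqrt_lt_sqrt (by positivity)
    nlinarith
  nlinarith

lemma hfun_lt (ν t : ℝ) (hν : 0 < ν) (ht : 0 < t) {y : ℝ} (hy : 0 < y) :
    2 * ν * hfun ν t y < t := by
  unfold hfun
  have hs : Real.sqrt (ν ^ 2 * y ^ 2 + t) ^ 2 = ν ^ 2 * y ^ 2 + t :=
    Real.sq_sqrt (by positivity)
  have hs0 : 0 ≤ Real.sqrt (ν ^ 2 * y ^ 2 + t) := Real.sqrt_nonneg _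
  -- 2ν y √(...) < t + 2ν²y²
  set s := Real.sqrt (ν ^ 2 * y ^ 2 + t) with hsdef
  have hsum : 0 < t + 2 * ν ^ 2 * y ^ 2 + 2 * ν * y * s := by positivity
  have hid : (t + 2 * ν ^ 2 * y ^ 2 - 2 * ν * y * s) * (t + 2 * ν ^ 2 * y ^ 2 + 2 * ν * y * s)
      = t ^ 2 := by linear_combination (-(4 * ν ^ 2 * y ^ 2)) * hs
  have key : 2 * ν * y * s < t + 2 * ν ^ 2 * y ^ 2 := by
    nlinarith [hid, hsum, mul_pos ht ht]
  nlinarith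
  
lemma hfun_equiv (ν t : ℝ) (hν : 0 < ν) (ht : 0 < t) {u y : ℝ} (hu : 0 < u) (hy : 0 < y) :
    (2 * ν * u < t ∧ u / Real.sqrt (t - 2 * ν * u) < y) ↔ u < hfun ν t y := by
  constructor
  · rintro ⟨h1, h2⟩
    have hs : 0 < Real.sqrt (t - 2 * ν * u) := Real.sqrt_pos.mpr (by linarith)
    have hsq : Real.sqrt (t - 2 * ν * u) ^ 2 = t - 2 * ν * u :=
      Real.sq_sqrt (by linarith)
    have h3 : u < y * Real.sqrt (t - 2 * ν * u) := by
      rw [div_lt_iff₀ hs] at h2; linarith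
    have h4 : u ^ 2 < y ^ 2 * (t - 2 * ν * u) := by nlinarith
    -- so (u + ν y²)² < y²(ν²y² + t)
    have h5 : (u + ν * y ^ 2) ^ 2 < y ^ 2 * (ν ^ 2 * y ^ 2 + t) := by nlinarith
    have h6 : u + ν * y ^ 2 < Real.sqrt (y ^ 2 * (ν ^ 2 * y ^ 2 + t)) := by
      rw [show u + ν * y ^ 2 = √((u + ν * y^2)^2) by rw [Real.sqrt_sq (by positivity)]]
      exact Real.sqrt_lt_sqrt (by positivity) h5
    have h7 : Real.sqrt (y ^ 2 * (ν ^ 2 * y ^ 2 + t)) = y * Real.sqrt (ν ^ 2 * y ^ 2 + t) := by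
      rw [Real.sqrt_mul (by positivity), Real.sqrt_sq hy.le]
    unfold hfun
    rw [h7] at h6
    linarith
  · intro h
    unfold hfun at h
    have hsA : Real.sqrt (ν ^ 2 * y ^ 2 + t) ^ 2 = ν ^ 2 * y ^ 2 + t :=
      Real.sq_sqrt (by positivity)
    have h6 : (u + ν * y ^ 2) ^ 2 < y ^ 2 * (ν ^ 2 * y ^ 2 + t) := by
      have hlt2 : u + ν * y ^ 2 < y * Real.sqrt (ν ^ 2 * y ^ 2 + t) := by linarith
      have hsq2 : (u + ν * y ^ 2) ^ 2 < (y * Real.sqrt (ν ^ 2 * y ^ 2 + t)) ^ 2 :=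
        pow_lt_pow_left₀ hlt2 (by positivity) (by norm_num)
      nlinarith [hsA]
    have h4 : u ^ 2 < y ^ 2 * (t - 2 * ν * u) := by nlinarith
    have h1 : 2 * ν * u < t := by nlinarith
    refine ⟨h1, ?_⟩
    have hs : 0 < Real.sqrt (t - 2 * ν * u) := Real.sqrt_pos.mpr (by linarith)
    have hsq : Real.sqrt (t - 2 * ν * u) ^ 2 = t - 2 * ν * u :=
      Real.sq_sqrt (by linarith)
    rw [div_lt_iff₀ hs]
    by_contra hcon
    push_neg at hcon
    have hle : (y * Real.sqrt (t - 2 * ν * u)) ^ 2 ≤ u ^ 2 :=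
      pow_le_pow_left₀ (by positivity) hcon 2
    nlinarith [hsq]

/-- For `ν > 0`, `t > 0`, with `P(u) = 2 − 2Φ(u/√(t − 2νu))` for `0 < 2νu < t` and `P(u) = 0`
for `2νu ≥ t`, one has `∫₀^∞ P(u) du = 2 ∫₀^∞ (y√(ν²y² + t) − νy²) φ(y) dy`. -/
theorem tail_integral_eq (ν t : ℝ) (hν : 0 < ν) (ht : 0 < t) :
    ∫ u in Set.Ioi (0:ℝ),
        (if 2 * ν * u < t then 2 - 2 * stdGaussianCDF (u / Real.sqrt (t - 2 * ν * u)) else 0)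
      = 2 * ∫ y in Set.Ioi (0:ℝ),
          (y * Real.sqrt (ν ^ 2 * y ^ 2 + t) - ν * y ^ 2) * stdGaussianPDF y := by
  set G : ℝ → ENNReal := fun y => ENNReal.ofReal (stdGaussianPDF y) with hG
  set F : ℝ → ℝ → ENNReal := fun u y => if u < hfun ν t y then G y else 0 with hF
  set P : ℝ → ℝ := fun u =>
    if 2 * ν * u < t then 2 - 2 * stdGaussianCDF (u / Real.sqrt (t - 2 * ν * u)) else 0 with hP
  have hGmeas : Measurable G := stdGaussianPDF_measurable.ennreal_ofReal
  have hcont : Continuous (hfun ν t) := by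
    unfold hfun; fun_prop
  have hPnonneg : ∀ u, 0 ≤ P u := by
    intro u
    rw [hP]
    dsimp only
    split
    · have := stdGaussianCDF_le_one (u / Real.sqrt (t - 2 * ν * u)); linarith
    · exact le_refl 0
  have hPmeas : Measurable P := by
    apply Measurable.ite
    · exact measurableSet_lt (by fun_prop) measurable_const
    · apply Measurable.const_sub
      apply Measurable.const_mul
      exact stdGaussianCDF_mono.measurable.comp
        (measurable_id.div ((measurable_const.sub (by fun_prop)).sqrt))
    · exact measurable_const
  -- Step: pointwise identity of ofReal (P u) with 2 * inner lintegral
  have key : ∀ u ∈ Set.Ioi (0:ℝ),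
      ENNReal.ofReal (P u) = 2 * ∫⁻ y in Set.Ioi (0:ℝ), F u y := by
    intro u hu
    rw [Set.mem_Ioi] at hu
    rw [hP]
    dsimp only
    by_cases hlt : 2 * ν * u < t
    · rw [if_pos hlt, stdGaussianCDF_tail]
      have hg0 : 0 < u / Real.sqrt (t - 2 * ν * u) := by
        apply div_pos hu (Real.sqrt_pos.mpr (by linarith))
      set g := u / Real.sqrt (t - 2 * ν * u)
      have hInner : ∫⁻ y in Set.Ioi (0:ℝ), F u y = ∫⁻ y in Set.Ioi g, G y := by
        have h1 : ∫⁻ y in Set.Ioi (0:ℝ), F u y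
            = ∫⁻ y in Set.Ioi (0:ℝ), (Set.Ioi g).indicator G y := by
          apply setLIntegral_congr_fun measurableSet_Ioi
          intro y hy
          rw [Set.mem_Ioi] at hy
          rw [hF]
          dsimp only
          have hiff := hfun_equiv ν t hν ht hu hy
          by_cases hc : u < hfun ν t y
          · rw [if_pos hc, Set.indicator_of_mem]
            exact Set.mem_Ioi.mpr (hiff.mpr hc).2
          · rw [if_neg hc, Set.indicator_of_notMem]
            intro hmem
            exact hc (hiff.mp ⟨hlt, Set.mem_Ioi.mp hmem⟩)
        rw [h1, lintegral_indicator measurableSet_Ioi,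
          Measure.restrict_restrict measurableSet_Ioi,
          Set.inter_eq_left.mpr (Set.Ioi_subset_Ioi hg0.le)]
      rw [hInner, ENNReal.ofReal_mul (by norm_num : (0:ℝ) ≤ 2),
        ofReal_integral_eq_lintegral_ofReal stdGaussianPDF_integrable.integrableOn
          (Filter.Eventually.of_forall stdGaussianPDF_nonneg)]
      norm_num
      rfl
    · rw [if_neg hlt, ENNReal.ofReal_zero]
      have : ∫⁻ y in Set.Ioi (0:ℝ), F u y = 0 := by
        rw [← lintegral_zero (μ := volume.restrict (Set.Ioi (0:ℝ)))]
        apply setLIntegral_congr_fun measurableSet_Ioi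
        intro y hy
        rw [Set.mem_Ioi] at hy
        rw [hF]
        dsimp only
        rw [if_neg]
        intro hc
        have h1 := hfun_lt ν t hν ht hy
        push_neg at hlt
        nlinarith
      rw [this, mul_zero]
  -- F is measurable in both variables
  have hFmeas : AEMeasurable (Function.uncurry F)
      ((volume.restrict (Set.Ioi (0:ℝ))).prod (volume.restrict (Set.Ioi (0:ℝ)))) := by
    apply Measurable.aemeasurable
    apply Measurable.ite
    · exact measurableSet_lt measurable_fst (hcont.measurable.comp measurable_snd)
    · exact hGmeas.comp measurable_snd
    · exact measurable_const
  -- inner u-integral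
  have hinner : ∀ y ∈ Set.Ioi (0:ℝ),
      ∫⁻ u in Set.Ioi (0:ℝ), F u y
        = ENNReal.ofReal (hfun ν t y * stdGaussianPDF y) := by
    intro y hy
    rw [Set.mem_Ioi] at hy
    have h1 : ∀ u, F u y = (Set.Iio (hfun ν t y)).indicator (fun _ => G y) u := by
      intro u
      rw [hF]
      dsimp only
      by_cases hc : u < hfun ν t y
      · rw [if_pos hc, Set.indicator_of_mem (Set.mem_Iio.mpr hc)]
      · rw [if_neg hc, Set.indicator_of_notMem (fun hm => hc (Set.mem_Iio.mp hm))]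
    simp_rw [h1]
    rw [lintegral_indicator measurableSet_Iio,
      Measure.restrict_restrict measurableSet_Iio, setLIntegral_const,
      Set.Iio_inter_Ioi, Real.volume_Ioo, sub_zero, hG]
    dsimp only
    rw [← ENNReal.ofReal_mul (stdGaussianPDF_nonneg y), mul_comm]
  -- integrability of hfun * pdf on Ioi 0
  have hIntOn : IntegrableOn (fun y => hfun ν t y * stdGaussianPDF y) (Set.Ioi (0:ℝ)) := by
    apply Integrable.mono ((stdGaussianPDF_integrable.const_mul (t / (2 * ν))).integrableOn)
    · exact ((hcont.mul stdGaussianPDF_continuous).aestronglyMeasurable).restrict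
    · rw [ae_restrict_iff' measurableSet_Ioi]
      apply Filter.Eventually.of_forall
      intro y hy
      rw [Set.mem_Ioi] at hy
      have h1 := hfun_pos ν t hν ht hy
      have h2 := hfun_lt ν t hν ht hy
      have h3 := stdGaussianPDF_nonneg y
      have h4 : hfun ν t y ≤ t / (2 * ν) := by
        rw [le_div_iff₀ (by positivity)]; nlinarith
      rw [norm_mul, Real.norm_eq_abs, Real.norm_eq_abs, Real.norm_eq_abs,
        abs_of_pos h1, abs_of_nonneg h3, abs_of_nonneg (by positivity : (0:ℝ) ≤ t / (2*ν) * stdGaussianPDF y)]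
      exact mul_le_mul_of_nonneg_right h4 h3
  have hRHSnonneg : (0:ℝ) ≤ ∫ y in Set.Ioi (0:ℝ), hfun ν t y * stdGaussianPDF y := by
    apply setIntegral_nonneg measurableSet_Ioi
    intro y hy
    rw [Set.mem_Ioi] at hy
    exact mul_nonneg (hfun_pos ν t hν ht hy).le (stdGaussianPDF_nonneg y)
  -- main calculation
  have hLHS : ∫ u in Set.Ioi (0:ℝ), P u
      = (∫⁻ u in Set.Ioi (0:ℝ), ENNReal.ofReal (P u)).toReal := by
    rw [integral_eq_lintegral_of_nonneg_ae
      (Filter.Eventually.of_forall hPnonneg) hPmeas.aestronglyMeasurable.restrict]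
  have hchain : ∫⁻ u in Set.Ioi (0:ℝ), ENNReal.ofReal (P u)
      = ENNReal.ofReal (2 * ∫ y in Set.Ioi (0:ℝ), hfun ν t y * stdGaussianPDF y) := by
    rw [setLIntegral_congr_fun measurableSet_Ioi key]
    rw [lintegral_const_mul' 2 _ (by norm_num)]
    rw [lintegral_lintegral_swap hFmeas]
    rw [setLIntegral_congr_fun measurableSet_Ioi hinner]
    rw [← ofReal_integral_eq_lintegral_ofReal hIntOn]
    · rw [ENNReal.ofReal_mul (by norm_num : (0:ℝ) ≤ 2)]
      norm_num
    · filter_upwards [ae_restrict_mem measurableSet_Ioi] with y hy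
      exact mul_nonneg (hfun_pos ν t hν ht (Set.mem_Ioi.mp hy)).le (stdGaussianPDF_nonneg y)
  have hfinal : ∫ u in Set.Ioi (0:ℝ), P u
      = 2 * ∫ y in Set.Ioi (0:ℝ), hfun ν t y * stdGaussianPDF y := by
    rw [hLHS, hchain, ENNReal.toReal_ofReal (by linarith)]
  calc ∫ u in Set.Ioi (0:ℝ),
        (if 2 * ν * u < t then 2 - 2 * stdGaussianCDF (u / Real.sqrt (t - 2 * ν * u)) else 0)
      = ∫ u in Set.Ioi (0:ℝ), P u := by rfl
    _ = 2 * ∫ y in Set.Ioi (0:ℝ), hfun ν t y * stdGaussianPDF y := hfinal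
    _ = 2 * ∫ y in Set.Ioi (0:ℝ),
          (y * Real.sqrt (ν ^ 2 * y ^ 2 + t) - ν * y ^ 2) * stdGaussianPDF y := by rfl
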